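/- For every α in the open unit disc and every z on the unit circle, the radial (normal) derivative at z of the function w ↦ log|1 - conj(α)·w| + log|w - α| equals 1; that is, (d/dr)|_{r=1} [ log|1 - conj(α)·(r z)| + log|r z - α| ] = 1. -/

import Mathlib

open Complex

/-- For α in the open unit disc and z on the unit circle, the radial derivative at r = 1
of r ↦ log|1 - conj(α)(rz)| + log|rz - α| equals 1. -/
theorem stmt_1 (α z : ℂ) (hα : ‖α‖ < 1) (hz : ‖z‖ = 1) :
    deriv (fun r : ℝ => Real.log ‖1 - (starRingEnd ℂ) α * ((r : ℂ) * z)‖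
      + Real.log ‖(r : ℂ) * z - α‖) 1 = 1 := by
  have hzz : z * (starRingEnd ℂ) z = 1 := by
    rw [Complex.mul_conj]
    norm_cast
    rw [← Complex.sq_norm, hz]; norm_num
  -- rewrite the function
  have hfun : (fun r : ℝ => Real.log ‖1 - (starRingEnd ℂ) α * ((r : ℂ) * z)‖
      + Real.log ‖(r : ℂ) * z - α‖)
      = fun r : ℝ => (Complex.log (1 - (starRingEnd ℂ) α * ((r : ℂ) * z))).re
        + (Complex.log ((r : ℂ) - α * (starRingEnd ℂ) z)).re := by
    funext r
    rw [Complex.log_re, Complex.log_re]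
    congr 2
    have : (r : ℂ) * z - α = z * ((r : ℂ) - α * (starRingEnd ℂ) z) := by
      linear_combination α * hzz
    rw [this, norm_mul, hz, one_mul]
  rw [hfun]
  -- nonvanishing facts
  have h1re : 0 < (1 - (starRingEnd ℂ) α * ((1 : ℝ) * z : ℂ)).re := by
    have habs : ‖(starRingEnd ℂ) α * ((1:ℝ) * z)‖ < 1 := by
      simp [map_mul, hz, hα]
    have := Complex.abs_re_le_norm ((starRingEnd ℂ) α * ((1:ℝ) * z))
    have := neg_abs_le ((starRingEnd ℂ) α * ((1:ℝ) * z)).re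
    simp only [Complex.sub_re, Complex.one_re]
    linarith [le_abs_self (((starRingEnd ℂ) α * ((1:ℝ) * z)).re)]
  have h2re : 0 < (((1:ℝ) : ℂ) - α * (starRingEnd ℂ) z).re := by
    have habs : ‖α * (starRingEnd ℂ) z‖ < 1 := by
      simp [map_mul, hz, hα]
    have := Complex.abs_re_le_norm (α * (starRingEnd ℂ) z)
    have := neg_abs_le ((α * (starRingEnd ℂ) z)).re
    simp only [Complex.sub_re, Complex.one_re, Complex.ofReal_one]
    linarith [le_abs_self ((α * (starRingEnd ℂ) z).re)]
  -- derivatives of inner functions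
  have hd1 : HasDerivAt (fun r : ℝ => 1 - (starRingEnd ℂ) α * ((r : ℂ) * z))
      (-((starRingEnd ℂ) α * z)) 1 := by
    have : HasDerivAt (fun r : ℝ => ((r : ℂ))) 1 1 := Complex.ofRealCLM.hasDerivAt
    simpa using (((this.mul_const z).const_mul ((starRingEnd ℂ) α)).const_sub 1)
  have hd2 : HasDerivAt (fun r : ℝ => ((r : ℂ) - α * (starRingEnd ℂ) z)) 1 1 := by
    simpa using (Complex.ofRealCLM.hasDerivAt (x := (1:ℝ))).sub_const (α * (starRingEnd ℂ) z)
  have hl1 := hd1.clog_real (by left; simpa using h1re)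
  have hl2 := hd2.clog_real (by left; simpa using h2re)
  have hr1 := Complex.reCLM.hasFDerivAt.comp_hasDerivAt 1 hl1
  have hr2 := Complex.reCLM.hasFDerivAt.comp_hasDerivAt 1 hl2
  have hsum := (hr1.add hr2)
  simp only [Function.comp_def, Complex.reCLM_apply, Pi.add_def] at hsum
  rw [hsum.deriv]
  have hne : (1 : ℂ) - (starRingEnd ℂ) α * ((1:ℝ) * z) ≠ 0 := by
    intro h
    have h0 : ((1:ℝ):ℂ) * z = z := by norm_num
    rw [h0] at h
    have h1 : (starRingEnd ℂ) α * z = 1 := by linear_combination -h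
    have : ‖(starRingEnd ℂ) α * z‖ = 1 := by rw [h1]; simp
    rw [norm_mul, Complex.norm_conj, hz, mul_one] at this
    linarith
  have hconj : ((1:ℝ):ℂ) - α * (starRingEnd ℂ) z
      = (starRingEnd ℂ) (1 - (starRingEnd ℂ) α * ((1:ℝ) * z)) := by
    simp [map_sub, map_mul]
  rw [hconj]
  have hdiv : (1 / (starRingEnd ℂ) (1 - (starRingEnd ℂ) α * ((1:ℝ) * z)))
      = (starRingEnd ℂ) (1 / (1 - (starRingEnd ℂ) α * ((1:ℝ) * z))) := by
    rw [map_div₀, map_one]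
  rw [hdiv, Complex.conj_re, ← Complex.add_re]
  have key : -((starRingEnd ℂ) α * z) / (1 - (starRingEnd ℂ) α * ((1:ℝ) * z))
      + 1 / (1 - (starRingEnd ℂ) α * ((1:ℝ) * z)) = 1 := by
    have hne' : (1 : ℂ) - (starRingEnd ℂ) α * z ≠ 0 := by simpa using hne
    simp only [Complex.ofReal_one, one_mul]
    field_simp
    ring
  rw [key]
  simp
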